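/- Let γ be a finitely supported integer sequence and i a positive integer, and let η = (γ_1, …, γ_{i−1}, γ_{i+1} − 1, γ_i + 1, γ_{i+2}, …) be obtained from γ by swapping entries i and i+1 and correcting by subtracting 1 from the new i-th entry and adding 1 to the new (i+1)-st entry. Then χ^γ = −χ^η, where χ^γ := Σ_{σ ∈ S_l} sgn(σ) ξ^{γ + σ − id_l} for any l with γ supported in positions 1,…,l. -/

import Mathlib

open Finsupp
open scoped Classical

/-- The row index of `k` in the standard tabloid of shape `α`: the least `i` such that
`k < α 0 + ⋯ + α i`. -/
noncomputable def rowIdx (α : ℕ →₀ ℤ) (k : ℕ) : ℕ := sInf {i | (k : ℤ) < ∑ j ∈ Finset.range (i + 1), α j}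

/-- The Young subgroup of `S_n` associated to `α`: the stabilizer of the standard tabloid
whose rows are the consecutive blocks of `{0, …, n-1}` of sizes `α 0, α 1, …`. -/
def youngSubgroup (n : ℕ) (α : ℕ →₀ ℤ) : Subgroup (Equiv.Perm (Fin n)) where
  carrier := {σ | ∀ k : Fin n, rowIdx α (σ k) = rowIdx α k}
  one_mem' := fun _ => rfl
  mul_mem' := by
    intro a b ha hb k
    simpa [Equiv.Perm.mul_apply] using (ha (b k)).trans (hb k)
  inv_mem' := by
    intro a ha k
    have := ha (a⁻¹ k)
    rw [← Equiv.Perm.mul_apply, mul_inv_cancel, Equiv.Perm.one_apply] at this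
    exact this.symm

/-- The value at `g` of the permutation character of `G` acting on the cosets of `H`:
the number of fixed cosets.  This is the value of the character induced from the
trivial character of `H`. -/
noncomputable def permCharValue {n : ℕ} (H : Subgroup (Equiv.Perm (Fin n)))
    (g : Equiv.Perm (Fin n)) : ℤ :=
  Nat.card {x : Equiv.Perm (Fin n) ⧸ H // g • x = x}

/-- `ξ^α`, as a function on `S_n`: the permutation character induced from the trivial
character of the Young subgroup `S_α` when `α` is nonnegative with `|α| = n`, and `0`
otherwise. -/
noncomputable def xi (n : ℕ) (α : ℕ →₀ ℤ) (g : Equiv.Perm (Fin n)) : ℤ :=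
  if (∀ i, 0 ≤ α i) ∧ (α.sum fun _ v => v) = (n : ℤ) then permCharValue (youngSubgroup n α) g
  else 0

/-- An `α`-tabloid: a sequence of pairwise disjoint subsets of `{0,…,n-1}` with
`|t i| = α i` for every `i`. -/
def IsTabloid (n : ℕ) (α : ℕ →₀ ℤ) (t : ℕ → Finset (Fin n)) : Prop :=
  (∀ i j, i ≠ j → Disjoint (t i) (t j)) ∧ ∀ i, ((t i).card : ℤ) = α i

/-- The multiset of (nonzero) parts of a finitely supported sequence. -/
def partsOf (β : ℕ →₀ ℕ) : Multiset ℕ := β.support.val.map β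

/-- `σ` has cycle type `β` (with `1`s in `β` recording fixed points). -/
def HasCycleType {n : ℕ} (σ : Equiv.Perm (Fin n)) (β : ℕ →₀ ℕ) : Prop :=
  (β.sum fun _ v => v) = n ∧ σ.cycleType = Multiset.filter (fun k => 2 ≤ k) (partsOf β)

/-- A nonnegative sequence regarded as an integer sequence. -/
noncomputable def natToZ (β : ℕ →₀ ℕ) : ℕ →₀ ℤ := Finsupp.mapRange Int.ofNat rfl β

/-- The virtual character `χ^α = ∑_{σ ∈ S_l} sgn σ · ξ^{α + σ - id_l}` (0-indexed,
the sequence `α + σ - id_l` has `i`-th entry `α i + σ i - i`). -/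
noncomputable def chi (n l : ℕ) (α : ℕ →₀ ℤ) (g : Equiv.Perm (Fin n)) : ℤ :=
  ∑ σ : Equiv.Perm (Fin l),
    (Equiv.Perm.sign σ : ℤ) *
      xi n (α + ∑ i : Fin l, Finsupp.single (i : ℕ) (((σ i : ℕ) : ℤ) - (i : ℕ))) g

/-- `ζ^α`, the irreducible character of `S_n` corresponding to the partition `α` of `n`,
given by the determinantal formula `ζ^α = χ^α` (with `l = n ≥ l(α)`). -/
noncomputable def zeta (n : ℕ) (α : ℕ →₀ ℕ) (g : Equiv.Perm (Fin n)) : ℤ :=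
  chi n n (natToZ α) g

/-- `α` is a partition of `n`: weakly decreasing with `|α| = n`. -/
def IsPartitionOf (α : ℕ →₀ ℕ) (n : ℕ) : Prop :=
  (∀ i, α (i + 1) ≤ α i) ∧ (α.sum fun _ v => v) = n



/-- The transposition `(i, i+1)` as a function on `ℕ`. -/
def swapFn (i j : ℕ) : ℕ := if j = i then i + 1 else if j = i + 1 then i else j

lemma swapFn_swapFn (i j : ℕ) : swapFn i (swapFn i j) = j := by
  unfold swapFn; split_ifs <;> omega

/-- Partial sums. -/
noncomputable def Psum (α : ℕ →₀ ℤ) (m : ℕ) : ℤ := ∑ j ∈ Finset.range m, α j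

lemma Psum_mono (α : ℕ →₀ ℤ) (hpos : ∀ j, 0 ≤ α j) {m m' : ℕ} (h : m ≤ m') :
    Psum α m ≤ Psum α m' :=
  Finset.sum_le_sum_of_subset_of_nonneg (Finset.range_subset_range.2 h) (fun j _ _ => hpos j)

lemma Psum_nonneg (α : ℕ →₀ ℤ) (hpos : ∀ j, 0 ≤ α j) (m : ℕ) : 0 ≤ Psum α m :=
  Finset.sum_nonneg fun j _ => hpos j

lemma Psum_sum_eq (α : ℕ →₀ ℤ) {m : ℕ} (hm : α.support ⊆ Finset.range m) :
    Psum α m = α.sum fun _ v => v := by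
  rw [Finsupp.sum_of_support_subset α hm (fun _ v => v) (fun _ _ => rfl)]
  rfl

lemma Psum_le_sum (α : ℕ →₀ ℤ) (hpos : ∀ j, 0 ≤ α j) (m : ℕ) :
    Psum α m ≤ α.sum fun _ v => v := by
  obtain ⟨L, hL⟩ := α.support.exists_nat_subset_range
  have h2 : Psum α (max m L) = α.sum fun _ v => v :=
    Psum_sum_eq α (hL.trans (Finset.range_subset_range.2 (le_max_right m L)))
  calc Psum α m ≤ Psum α (max m L) := Psum_mono α hpos (le_max_left m L)
  _ = _ := h2

lemma rowIdx_eq_iff (α : ℕ →₀ ℤ) (hpos : ∀ j, 0 ≤ α j) (k m : ℕ)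
    (hk : (k : ℤ) < α.sum fun _ v => v) :
    rowIdx α k = m ↔ Psum α m ≤ (k : ℤ) ∧ (k : ℤ) < Psum α (m + 1) := by
  have hS : {i | (k : ℤ) < Psum α (i + 1)}.Nonempty := by
    obtain ⟨L, hL⟩ := α.support.exists_nat_subset_range
    refine ⟨L, ?_⟩
    have : Psum α (L + 1) = α.sum fun _ v => v :=
      Psum_sum_eq α (hL.trans (Finset.range_subset_range.2 (Nat.le_succ L)))
    simp only [Set.mem_setOf_eq, this]; exact hk
  have hrow : rowIdx α k = sInf {i | (k : ℤ) < Psum α (i + 1)} := rfl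
  constructor
  · rintro rfl
    have hmem := Nat.sInf_mem hS
    rw [← hrow] at hmem
    refine ⟨?_, hmem⟩
    rcases Nat.eq_zero_or_pos (rowIdx α k) with h0 | h0
    · rw [h0]; unfold Psum; simp
    · have hlt : rowIdx α k - 1 < sInf {i | (k : ℤ) < Psum α (i + 1)} := by omega
      have hnot := Nat.notMem_of_lt_sInf hlt
      simp only [Set.mem_setOf_eq, not_lt] at hnot
      have : rowIdx α k - 1 + 1 = rowIdx α k := by omega
      rwa [this] at hnot
  · rintro ⟨h1, h2⟩
    rw [hrow]
    apply le_antisymm (Nat.sInf_le h2)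
    by_contra hlt
    push_neg at hlt
    have hmem := Nat.sInf_mem hS
    have hle : Psum α (sInf {i | (k : ℤ) < Psum α (i + 1)} + 1) ≤ Psum α m :=
      Psum_mono α hpos (by omega)
    simp only [Set.mem_setOf_eq] at hmem
    omega

lemma Psum_swap (α α' : ℕ →₀ ℤ) (i : ℕ) (hswap : ∀ j, α' j = α (swapFn i j)) (m : ℕ) :
    Psum α' m = if m = i + 1 then Psum α i + α (i + 1) else Psum α m := by
  induction m with
  | zero => simp [Psum]
  | succ m ih =>
    have hs : Psum α' (m + 1) = Psum α' m + α' m := Finset.sum_range_succ _ _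
    have hs2 : ∀ r, Psum α (r + 1) = Psum α r + α r := fun r => Finset.sum_range_succ _ _
    rw [hs, ih, hswap m]
    unfold swapFn
    by_cases h1 : m = i
    · subst h1; simp [hs2]
    · by_cases h2 : m = i + 1
      · subst h2
        have hne : (i : ℕ) + 1 + 1 ≠ i + 1 := by omega
        rw [if_neg hne, if_pos rfl, if_neg h1, if_pos rfl, hs2, hs2]
        ring
      · rw [if_neg h1, if_neg h2, if_neg h2, if_neg (by omega), hs2]

lemma sum_swap_eq (α α' : ℕ →₀ ℤ) (i : ℕ) (hswap : ∀ j, α' j = α (swapFn i j)) :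
    (α'.sum fun _ v => v) = α.sum fun _ v => v := by
  obtain ⟨L1, h1⟩ := α.support.exists_nat_subset_range
  obtain ⟨L2, h2⟩ := α'.support.exists_nat_subset_range
  set L := max (max L1 L2) (i + 2) with hL
  have e1 : Psum α L = α.sum fun _ v => v :=
    Psum_sum_eq α (h1.trans (Finset.range_subset_range.2 (by omega)))
  have e2 : Psum α' L = α'.sum fun _ v => v :=
    Psum_sum_eq α' (h2.trans (Finset.range_subset_range.2 (by omega)))
  rw [← e1, ← e2, Psum_swap α α' i hswap, if_neg (by omega)]

lemma pos_swap (α α' : ℕ →₀ ℤ) (i : ℕ) (hswap : ∀ j, α' j = α (swapFn i j)) :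
    (∀ j, 0 ≤ α' j) ↔ (∀ j, 0 ≤ α j) :=
  ⟨fun h j => by have := h (swapFn i j); rwa [hswap, swapFn_swapFn] at this,
   fun h j => by rw [hswap]; exact h _⟩

/-- The block-swap map on `{0,…,n-1}`: swaps the interval `[A, A+B)` with `[A+B, A+B+C)`. -/
def swFun (A B C k : ℕ) : ℕ :=
  if k < A then k else if k < A + B then k + C else if k < A + B + C then k - B else k

lemma swFun_lt {A B C n : ℕ} (h : A + B + C ≤ n) {k : ℕ} (hk : k < n) : swFun A B C k < n := by
  unfold swFun; split_ifs <;> omega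

lemma swFun_inv (A B C k : ℕ) : swFun A C B (swFun A B C k) = k := by
  unfold swFun; split_ifs <;> omega

lemma exists_conj_perm (n i : ℕ) (α α' : ℕ →₀ ℤ) (hpos : ∀ j, 0 ≤ α j)
    (hsum : (α.sum fun _ v => v) = (n : ℤ)) (hswap : ∀ j, α' j = α (swapFn i j)) :
    ∃ c : Equiv.Perm (Fin n), ∀ k : Fin n, rowIdx α' (c k) = swapFn i (rowIdx α k) := by
  have hpos' : ∀ j, 0 ≤ α' j := (pos_swap α α' i hswap).2 hpos
  have hsum' : (α'.sum fun _ v => v) = (n : ℤ) := (sum_swap_eq α α' i hswap).trans hsum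
  set An := (Psum α i).toNat with hAn
  set Bn := (α i).toNat with hBn
  set Cn := (α (i + 1)).toNat with hCn
  have hA : (An : ℤ) = Psum α i := Int.toNat_of_nonneg (Psum_nonneg α hpos i)
  have hB : (Bn : ℤ) = α i := Int.toNat_of_nonneg (hpos i)
  have hC : (Cn : ℤ) = α (i + 1) := Int.toNat_of_nonneg (hpos (i + 1))
  have hPi1 : Psum α (i + 1) = Psum α i + α i := Finset.sum_range_succ _ _
  have hPi2 : Psum α (i + 2) = Psum α i + α i + α (i + 1) := by
    have h2 : Psum α (i + 2) = Psum α (i + 1) + α (i + 1) := Finset.sum_range_succ _ _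
    rw [h2, hPi1]
  have hbound : An + Bn + Cn ≤ n := by
    have := Psum_le_sum α hpos (i + 2)
    rw [hsum] at this
    omega
  refine ⟨⟨fun k => ⟨swFun An Bn Cn k, swFun_lt hbound k.2⟩,
          fun k => ⟨swFun An Cn Bn k, swFun_lt (by omega) k.2⟩,
          fun k => Fin.ext (swFun_inv An Bn Cn k),
          fun k => Fin.ext (swFun_inv An Cn Bn k)⟩, ?_⟩
  intro k
  set K := (k : ℕ) with hK
  have hKn : (K : ℤ) < α.sum fun _ v => v := by rw [hsum]; exact_mod_cast k.2
  set m := rowIdx α (K : ℕ) with hm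
  clear_value m
  obtain ⟨hm1, hm2⟩ := (rowIdx_eq_iff α hpos K m hKn).1 hm.symm
  have hPswap := Psum_swap α α' i hswap
  -- the value of c k
  have hckval : ∀ v : ℕ, swFun An Bn Cn K = v → ((v : ℤ) < α'.sum fun _ v => v) →
      (Psum α' (swapFn i m) ≤ (v : ℤ) ∧ (v : ℤ) < Psum α' (swapFn i m + 1)) →
      rowIdx α' (⟨swFun An Bn Cn K, swFun_lt hbound k.2⟩ : Fin n) = swapFn i m := by
    intro v hv hv2 hv3
    have : ((⟨swFun An Bn Cn K, swFun_lt hbound k.2⟩ : Fin n) : ℕ) = v := hv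
    rw [show (⟨swFun An Bn Cn K, swFun_lt hbound k.2⟩ : Fin n) = (⟨v, by omega⟩ : Fin n) from
      Fin.ext hv]
    exact (rowIdx_eq_iff α' hpos' v (swapFn i m) hv2).2 hv3
  have hKn' : (K : ℤ) < (n : ℤ) := by exact_mod_cast k.2
  by_cases h1 : m < i
  · -- first region: below both blocks
    have hKA : (K : ℤ) < (An : ℤ) := by
      rw [hA]; exact lt_of_lt_of_le hm2 (Psum_mono α hpos (by omega))
    have hKAn : K < An := by exact_mod_cast hKA
    have hv : swFun An Bn Cn K = K := by unfold swFun; rw [if_pos hKAn]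
    apply hckval K hv (by rw [hsum']; exact hKn')
    have hsw : swapFn i m = m := by unfold swapFn; split_ifs <;> omega
    rw [hsw, hPswap, hPswap, if_neg (by omega), if_neg (by omega)]
    exact ⟨hm1, hm2⟩
  by_cases h2 : m = i
  · -- second region: the B block, moves up by C
    subst h2
    have ha1 : (An : ℤ) ≤ (K : ℤ) := by rw [hA]; exact hm1
    have ha2 : (K : ℤ) < (An : ℤ) + (Bn : ℤ) := by rw [hA, hB, ← hPi1]; exact hm2
    have hv : swFun An Bn Cn K = K + Cn := by
      unfold swFun
      rw [if_neg (by omega), if_pos (by omega)]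
    apply hckval (K + Cn) hv (by rw [hsum']; push_cast; omega)
    have hsw : swapFn m m = m + 1 := by unfold swapFn; rw [if_pos rfl]
    rw [hsw, hPswap, hPswap, if_pos rfl, if_neg (by omega), hPi2]
    constructor
    · rw [← hA, ← hC]; push_cast; omega
    · rw [← hA, ← hB, ← hC]; push_cast; omega
  by_cases h3 : m = i + 1
  · -- third region: the C block, moves down by B
    subst h3
    have ha1 : (An : ℤ) + (Bn : ℤ) ≤ (K : ℤ) := by rw [hA, hB, ← hPi1]; exact hm1
    have ha2 : (K : ℤ) < (An : ℤ) + (Bn : ℤ) + (Cn : ℤ) := by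
      rw [hA, hB, hC, ← hPi2]; exact hm2
    have hv : swFun An Bn Cn K = K - Bn := by
      unfold swFun
      rw [if_neg (by omega), if_neg (by omega), if_pos (by omega)]
    apply hckval (K - Bn) hv (by rw [hsum']; push_cast; omega)
    have hsw : swapFn i (i + 1) = i := by unfold swapFn; rw [if_neg (by omega), if_pos rfl]
    rw [hsw, hPswap, hPswap, if_neg (by omega), if_pos rfl]
    constructor
    · rw [← hA]; omega
    · rw [← hA, ← hC]; omega
  · -- fourth region: above both blocks
    have hm' : i + 2 ≤ m := by omega
    have ha1 : (An : ℤ) + (Bn : ℤ) + (Cn : ℤ) ≤ (K : ℤ) := by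
      rw [hA, hB, hC, ← hPi2]
      exact le_trans (Psum_mono α hpos hm') hm1
    have hv : swFun An Bn Cn K = K := by
      unfold swFun
      rw [if_neg (by omega), if_neg (by omega), if_neg (by omega)]
    apply hckval K hv (by rw [hsum']; exact hKn')
    have hsw : swapFn i m = m := by unfold swapFn; split_ifs <;> omega
    rw [hsw, hPswap, hPswap, if_neg (by omega), if_neg (by omega)]
    exact ⟨hm1, hm2⟩

lemma mem_young {n : ℕ} {α : ℕ →₀ ℤ} {τ : Equiv.Perm (Fin n)} :
    τ ∈ youngSubgroup n α ↔ ∀ k : Fin n, rowIdx α (τ k) = rowIdx α k := Iff.rfl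

lemma permCharValue_conj {n : ℕ} (H H' : Subgroup (Equiv.Perm (Fin n)))
    (c : Equiv.Perm (Fin n)) (hmem : ∀ τ, τ ∈ H' ↔ c⁻¹ * τ * c ∈ H)
    (g : Equiv.Perm (Fin n)) : permCharValue H' g = permCharValue H g := by
  have h₁ : ∀ a b : Equiv.Perm (Fin n), @Setoid.r _ (QuotientGroup.leftRel H') a b →
      @Setoid.r _ (QuotientGroup.leftRel H) (a * c) (b * c) := by
    intro a b hab
    rw [QuotientGroup.leftRel_apply] at *
    have : a⁻¹ * b ∈ H' := hab
    have h2 := (hmem (a⁻¹ * b)).1 this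
    have : (a * c)⁻¹ * (b * c) = c⁻¹ * (a⁻¹ * b) * c := by group
    rw [this]; exact h2
  have h₂ : ∀ a b : Equiv.Perm (Fin n), @Setoid.r _ (QuotientGroup.leftRel H) a b →
      @Setoid.r _ (QuotientGroup.leftRel H') (a * c⁻¹) (b * c⁻¹) := by
    intro a b hab
    rw [QuotientGroup.leftRel_apply] at *
    have h2 : a⁻¹ * b ∈ H := hab
    have h3 : c⁻¹ * (c * (a⁻¹ * b) * c⁻¹) * c ∈ H := by
      have : c⁻¹ * (c * (a⁻¹ * b) * c⁻¹) * c = a⁻¹ * b := by group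
      rw [this]; exact h2
    have h4 := (hmem _).2 h3
    have : (a * c⁻¹)⁻¹ * (b * c⁻¹) = c * (a⁻¹ * b) * c⁻¹ := by group
    rw [this]; exact h4
  let e : (Equiv.Perm (Fin n) ⧸ H') ≃ (Equiv.Perm (Fin n) ⧸ H) :=
    { toFun := Quotient.map' (· * c) h₁
      invFun := Quotient.map' (· * c⁻¹) h₂
      left_inv := by
        intro x
        induction x using Quotient.inductionOn' with
        | h a => simp [Quotient.map'_mk'', mul_assoc]
      right_inv := by
        intro x
        induction x using Quotient.inductionOn' with
        | h a => simp [Quotient.map'_mk'', mul_assoc] }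
  have hequiv : ∀ x : Equiv.Perm (Fin n) ⧸ H', g • (e x) = e (g • x) := by
    intro x
    induction x using Quotient.inductionOn' with
    | h a =>
      show (Quotient.mk'' (g * (a * c)) : Equiv.Perm (Fin n) ⧸ H) = Quotient.mk'' (g * a * c)
      rw [mul_assoc]
  unfold permCharValue
  congr 1
  apply Nat.card_congr
  exact Equiv.subtypeEquiv e (fun x => by
    constructor
    · intro hx
      rw [hequiv x, hx]
    · intro hx
      apply e.injective
      rw [← hequiv x, hx])

lemma xi_swap (n i : ℕ) (α α' : ℕ →₀ ℤ) (hswap : ∀ j, α' j = α (swapFn i j))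
    (g : Equiv.Perm (Fin n)) : xi n α' g = xi n α g := by
  unfold xi
  by_cases h : (∀ j, 0 ≤ α j) ∧ (α.sum fun _ v => v) = (n : ℤ)
  · rw [if_pos h, if_pos ⟨(pos_swap α α' i hswap).2 h.1, (sum_swap_eq α α' i hswap).trans h.2⟩]
    obtain ⟨c, hc⟩ := exists_conj_perm n i α α' h.1 h.2 hswap
    apply permCharValue_conj _ _ c
    intro τ
    rw [mem_young, mem_young]
    constructor
    · intro hτ k
      have h5 : swapFn i (rowIdx α ((c⁻¹ * τ * c) k)) = swapFn i (rowIdx α k) := by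
        calc swapFn i (rowIdx α ((c⁻¹ * τ * c) k)) = rowIdx α' (c ((c⁻¹ * τ * c) k)) :=
              (hc _).symm
          _ = rowIdx α' (τ (c k)) := by
              congr 1
              simp [Equiv.Perm.mul_apply]
          _ = rowIdx α' (c k) := hτ (c k)
          _ = swapFn i (rowIdx α k) := hc k
      have := congrArg (swapFn i) h5
      rwa [swapFn_swapFn, swapFn_swapFn] at this
    · intro hτ k
      calc rowIdx α' (τ k) = rowIdx α' (c ((c⁻¹ * τ * c) (c⁻¹ k))) := by
            congr 1
            simp [Equiv.Perm.mul_apply]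
        _ = swapFn i (rowIdx α ((c⁻¹ * τ * c) (c⁻¹ k))) := hc _
        _ = swapFn i (rowIdx α (c⁻¹ k)) := by rw [hτ (c⁻¹ k)]
        _ = rowIdx α' (c (c⁻¹ k)) := (hc _).symm
        _ = rowIdx α' k := by rw [← Equiv.Perm.mul_apply, mul_inv_cancel, Equiv.Perm.one_apply]
  · rw [if_neg h, if_neg]
    intro h'
    exact h ⟨(pos_swap α α' i hswap).1 h'.1, ((sum_swap_eq α α' i hswap).symm.trans h'.2)⟩

lemma delta_apply (l : ℕ) (v : Fin l → ℤ) (j : ℕ) :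
    ((∑ t : Fin l, Finsupp.single (t : ℕ) (v t)) : ℕ →₀ ℤ) j
      = if h : j < l then v ⟨j, h⟩ else 0 := by
  rw [Finsupp.finset_sum_apply]
  by_cases h : j < l
  · rw [dif_pos h, Finset.sum_eq_single (⟨j, h⟩ : Fin l)]
    · simp
    · intro t _ ht
      rw [Finsupp.single_apply, if_neg]
      intro e; exact ht (Fin.ext e)
    · intro h'; exact absurd (Finset.mem_univ _) h'
  · rw [dif_neg h]
    apply Finset.sum_eq_zero
    intro t _
    rw [Finsupp.single_apply, if_neg]
    intro e; exact h (e ▸ t.2)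

/-- `χ^γ = -χ^η` where `η` is obtained from `γ` by swapping entries `i` and `i+1` and
correcting: `η_i = γ_{i+1} - 1`, `η_{i+1} = γ_i + 1` (written `0`-indexed). -/
theorem stmt5 (l n : ℕ) (γ η : ℕ →₀ ℤ) (i : ℕ)
    (hl : ∀ k, l ≤ k → γ k = 0) (hi : i + 1 < l)
    (hn : (γ.sum fun _ v => v) = (n : ℤ))
    (hη : η = (γ.update i (γ (i + 1) - 1)).update (i + 1) (γ i + 1)) :
    ∀ g : Equiv.Perm (Fin n), chi n l γ g = -chi n l η g := by
  intro g
  have hil : i < l := by omega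
  set a : Fin l := ⟨i, hil⟩ with hadef
  set b : Fin l := ⟨i + 1, hi⟩ with hbdef
  have hab : a ≠ b := by
    rw [hadef, hbdef]; intro e
    have := congrArg Fin.val e; simp at this
  set s : Equiv.Perm (Fin l) := Equiv.swap a b with hsdef
  have hηi : η i = γ (i + 1) - 1 := by
    simp only [hη, Finsupp.coe_update, Function.update_apply]
    split_ifs <;> first | rfl | omega
  have hηi1 : η (i + 1) = γ i + 1 := by
    simp only [hη, Finsupp.coe_update, Function.update_apply]
    split_ifs <;> first | rfl | omega
  have hηo : ∀ j', j' ≠ i → j' ≠ i + 1 → η j' = γ j' := by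
    intro j' h1 h2
    simp only [hη, Finsupp.coe_update, Function.update_apply]
    split_ifs <;> first | rfl | omega
  have key : ∀ σ : Equiv.Perm (Fin l),
      xi n (η + ∑ t : Fin l, Finsupp.single (t : ℕ) ((((σ * s) t : ℕ) : ℤ) - (t : ℕ))) g
        = xi n (γ + ∑ t : Fin l, Finsupp.single (t : ℕ) (((σ t : ℕ) : ℤ) - (t : ℕ))) g := by
    intro σ
    apply xi_swap n i
    intro j
    rw [Finsupp.add_apply, Finsupp.add_apply, delta_apply, delta_apply]
    by_cases hji : j = i
    · subst hji
      have hsw : swapFn j j = j + 1 := by unfold swapFn; rw [if_pos rfl]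
      rw [hsw, dif_pos hil, dif_pos hi, hηi]
      have h1 : (σ * s) ⟨j, hil⟩ = σ ⟨j + 1, hi⟩ := by
        rw [Equiv.Perm.mul_apply]
        congr 1
        exact Equiv.swap_apply_left a b
      rw [h1]
      push_cast
      ring
    · by_cases hji1 : j = i + 1
      · subst hji1
        have hsw : swapFn i (i + 1) = i := by
          unfold swapFn; rw [if_neg (by omega), if_pos rfl]
        rw [hsw, dif_pos hi, dif_pos hil, hηi1]
        have h1 : (σ * s) ⟨i + 1, hi⟩ = σ ⟨i, hil⟩ := by
          rw [Equiv.Perm.mul_apply]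
          congr 1
          exact Equiv.swap_apply_right a b
        rw [h1]
        push_cast
        ring
      · have hsw : swapFn i j = j := by unfold swapFn; split_ifs <;> omega
        rw [hsw, hηo j hji hji1]
        by_cases hjl : j < l
        · rw [dif_pos hjl, dif_pos hjl]
          have h1 : (σ * s) ⟨j, hjl⟩ = σ ⟨j, hjl⟩ := by
            rw [Equiv.Perm.mul_apply]
            congr 1
            apply Equiv.swap_apply_of_ne_of_ne
            · intro e; exact hji (congrArg Fin.val e)
            · intro e; exact hji1 (congrArg Fin.val e)
          rw [h1]
        · rw [dif_neg hjl, dif_neg hjl]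
  have hsign : (Equiv.Perm.sign s : ℤ) = -1 := by
    rw [hsdef, Equiv.Perm.sign_swap hab]
    rfl
  have hstep : chi n l η g = -chi n l γ g := by
    unfold chi
    rw [← Equiv.sum_comp (Equiv.mulRight s)
      (fun σ => ((Equiv.Perm.sign σ : ℤ) *
        xi n (η + ∑ t : Fin l, Finsupp.single (t : ℕ) (((σ t : ℕ) : ℤ) - (t : ℕ))) g))]
    rw [← Finset.sum_neg_distrib]
    apply Finset.sum_congr rfl
    intro σ _
    simp only [Equiv.coe_mulRight]
    rw [key σ, Equiv.Perm.sign_mul]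
    push_cast
    rw [hsign]
    ring
  rw [hstep, neg_neg]
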